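/- Let b, b̃ ∈ ℝ³, r, r̃ ≥ 0, d, d̃ ∈ S², and let h, k, k̃ be unit vectors with h ⟂ d, h ⟂ d̃ and (h,k,d), (h,k̃,d̃) orthonormal bases with the same orientation. For φ ∈ [0,2π) consider the diagonal coupling x(φ) = b + r cos φ · k + r sin φ · h and y(φ) = b̃ + r̃ cos φ · k̃ + r̃ sin φ · h. Then (1/(2π)) ∫₀^{2π} |x(φ) − y(φ)|² dφ = |b−b̃|² + r² + r̃² − r r̃ (1 + d·d̃). -/

import Mathlib

lemma key_inner (h0 h1 h2 k0 k1 k2 kt0 kt1 kt2 d0 d1 d2 dt0 dt1 dt2 : ℝ)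
    (Hh : h0^2+h1^2+h2^2 = 1) (Hk : k0^2+k1^2+k2^2 = 1) (Hkt : kt0^2+kt1^2+kt2^2 = 1)
    (Hd : d0^2+d1^2+d2^2 = 1) (Hdt : dt0^2+dt1^2+dt2^2 = 1)
    (Ohk : h0*k0+h1*k1+h2*k2 = 0) (Ohkt : h0*kt0+h1*kt1+h2*kt2 = 0)
    (Ohd : h0*d0+h1*d1+h2*d2 = 0) (Ohdt : h0*dt0+h1*dt1+h2*dt2 = 0)
    (Okd : k0*d0+k1*d1+k2*d2 = 0) (Oktdt : kt0*dt0+kt1*dt1+kt2*dt2 = 0)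
    (Hor : (d0*(h1*k2-h2*k1)+d1*(h2*k0-h0*k2)+d2*(h0*k1-h1*k0)) = (dt0*(h1*kt2-h2*kt1)+dt1*(h2*kt0-h0*kt2)+dt2*(h0*kt1-h1*kt0))) :
    d0*dt0+d1*dt1+d2*dt2 = k0*kt0+k1*kt1+k2*kt2 := by
  have e0 : d0 = (d0*(h1*k2-h2*k1)+d1*(h2*k0-h0*k2)+d2*(h0*k1-h1*k0)) * (h1*k2-h2*k1) := by
    linear_combination (-d0*(k0^2+k1^2+k2^2))*Hh + (-d0)*Hk + (d0*(h0*k0+h1*k1+h2*k2))*Ohk + ((h0^2+h1^2+h2^2)*k0 - (h0*k0+h1*k1+h2*k2)*h0)*Okd + (-((h0*k0+h1*k1+h2*k2)*k0 - (k0^2+k1^2+k2^2)*h0))*Ohd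
  have e1 : d1 = (d0*(h1*k2-h2*k1)+d1*(h2*k0-h0*k2)+d2*(h0*k1-h1*k0)) * (h2*k0-h0*k2) := by
    linear_combination (-d1*(k0^2+k1^2+k2^2))*Hh + (-d1)*Hk + (d1*(h0*k0+h1*k1+h2*k2))*Ohk + ((h0^2+h1^2+h2^2)*k1 - (h0*k0+h1*k1+h2*k2)*h1)*Okd + (-((h0*k0+h1*k1+h2*k2)*k1 - (k0^2+k1^2+k2^2)*h1))*Ohd
  have e2 : d2 = (d0*(h1*k2-h2*k1)+d1*(h2*k0-h0*k2)+d2*(h0*k1-h1*k0)) * (h0*k1-h1*k0) := by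
    linear_combination (-d2*(k0^2+k1^2+k2^2))*Hh + (-d2)*Hk + (d2*(h0*k0+h1*k1+h2*k2))*Ohk + ((h0^2+h1^2+h2^2)*k2 - (h0*k0+h1*k1+h2*k2)*h2)*Okd + (-((h0*k0+h1*k1+h2*k2)*k2 - (k0^2+k1^2+k2^2)*h2))*Ohd
  have f0 : dt0 = (dt0*(h1*kt2-h2*kt1)+dt1*(h2*kt0-h0*kt2)+dt2*(h0*kt1-h1*kt0)) * (h1*kt2-h2*kt1) := by
    linear_combination (-dt0*(kt0^2+kt1^2+kt2^2))*Hh + (-dt0)*Hkt + (dt0*(h0*kt0+h1*kt1+h2*kt2))*Ohkt + ((h0^2+h1^2+h2^2)*kt0 - (h0*kt0+h1*kt1+h2*kt2)*h0)*Oktdt + (-((h0*kt0+h1*kt1+h2*kt2)*kt0 - (kt0^2+kt1^2+kt2^2)*h0))*Ohdt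
  have f1 : dt1 = (dt0*(h1*kt2-h2*kt1)+dt1*(h2*kt0-h0*kt2)+dt2*(h0*kt1-h1*kt0)) * (h2*kt0-h0*kt2) := by
    linear_combination (-dt1*(kt0^2+kt1^2+kt2^2))*Hh + (-dt1)*Hkt + (dt1*(h0*kt0+h1*kt1+h2*kt2))*Ohkt + ((h0^2+h1^2+h2^2)*kt1 - (h0*kt0+h1*kt1+h2*kt2)*h1)*Oktdt + (-((h0*kt0+h1*kt1+h2*kt2)*kt1 - (kt0^2+kt1^2+kt2^2)*h1))*Ohdt
  have f2 : dt2 = (dt0*(h1*kt2-h2*kt1)+dt1*(h2*kt0-h0*kt2)+dt2*(h0*kt1-h1*kt0)) * (h0*kt1-h1*kt0) := by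
    linear_combination (-dt2*(kt0^2+kt1^2+kt2^2))*Hh + (-dt2)*Hkt + (dt2*(h0*kt0+h1*kt1+h2*kt2))*Ohkt + ((h0^2+h1^2+h2^2)*kt2 - (h0*kt0+h1*kt1+h2*kt2)*h2)*Oktdt + (-((h0*kt0+h1*kt1+h2*kt2)*kt2 - (kt0^2+kt1^2+kt2^2)*h2))*Ohdt
  have hnnt : (h1*k2-h2*k1)*(h1*kt2-h2*kt1)+(h2*k0-h0*k2)*(h2*kt0-h0*kt2)+(h0*k1-h1*k0)*(h0*kt1-h1*kt0) = k0*kt0+k1*kt1+k2*kt2 := by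
    linear_combination (k0*kt0+k1*kt1+k2*kt2)*Hh + (-(h0*k0+h1*k1+h2*k2))*Ohkt
  have heps2 : (d0*(h1*k2-h2*k1)+d1*(h2*k0-h0*k2)+d2*(h0*k1-h1*k0))^2 = 1 := by
    linear_combination (-(d0+(d0*(h1*k2-h2*k1)+d1*(h2*k0-h0*k2)+d2*(h0*k1-h1*k0))*(h1*k2-h2*k1)))*e0 + (-(d1+(d0*(h1*k2-h2*k1)+d1*(h2*k0-h0*k2)+d2*(h0*k1-h1*k0))*(h2*k0-h0*k2)))*e1 + (-(d2+(d0*(h1*k2-h2*k1)+d1*(h2*k0-h0*k2)+d2*(h0*k1-h1*k0))*(h0*k1-h1*k0)))*e2 + Hd + (-(d0*(h1*k2-h2*k1)+d1*(h2*k0-h0*k2)+d2*(h0*k1-h1*k0))^2*(k0^2+k1^2+k2^2))*Hh + (-(d0*(h1*k2-h2*k1)+d1*(h2*k0-h0*k2)+d2*(h0*k1-h1*k0))^2)*Hk + ((d0*(h1*k2-h2*k1)+d1*(h2*k0-h0*k2)+d2*(h0*k1-h1*k0))^2*(h0*k0+h1*k1+h2*k2))*Ohk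
  linear_combination dt0*e0 + dt1*e1 + dt2*e2 + (d0*(h1*k2-h2*k1)+d1*(h2*k0-h0*k2)+d2*(h0*k1-h1*k0))*(h1*k2-h2*k1)*f0 + (d0*(h1*k2-h2*k1)+d1*(h2*k0-h0*k2)+d2*(h0*k1-h1*k0))*(h2*k0-h0*k2)*f1 + (d0*(h1*k2-h2*k1)+d1*(h2*k0-h0*k2)+d2*(h0*k1-h1*k0))*(h0*k1-h1*k0)*f2 + (d0*(h1*k2-h2*k1)+d1*(h2*k0-h0*k2)+d2*(h0*k1-h1*k0))*(dt0*(h1*kt2-h2*kt1)+dt1*(h2*kt0-h0*kt2)+dt2*(h0*kt1-h1*kt0))*hnnt + (-(k0*kt0+k1*kt1+k2*kt2)*(d0*(h1*k2-h2*k1)+d1*(h2*k0-h0*k2)+d2*(h0*k1-h1*k0)))*Hor + (k0*kt0+k1*kt1+k2*kt2)*heps2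

open Real

/-- The cross product on `ℝ³` (as `EuclideanSpace ℝ (Fin 3)`). -/
noncomputable def cross3 (x y : EuclideanSpace ℝ (Fin 3)) : EuclideanSpace ℝ (Fin 3) :=
  (WithLp.equiv 2 (Fin 3 → ℝ)).symm
    ![x 1 * y 2 - x 2 * y 1, x 2 * y 0 - x 0 * y 2, x 0 * y 1 - x 1 * y 0]

lemma norm_coord (x : EuclideanSpace ℝ (Fin 3)) : ‖x‖^2 = x 0^2 + x 1^2 + x 2^2 := by
  rw [EuclideanSpace.norm_eq, Real.sq_sqrt (by positivity)]
  simp [Fin.sum_univ_three, sq_abs]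

lemma inner_coord (x y : EuclideanSpace ℝ (Fin 3)) :
    (inner ℝ x y) = x 0 * y 0 + x 1 * y 1 + x 2 * y 2 := by
  simp [PiLp.inner_apply, RCLike.inner_apply, Fin.sum_univ_three, mul_comm]

lemma unit_coord (x : EuclideanSpace ℝ (Fin 3)) (hx : ‖x‖ = 1) :
    x 0^2 + x 1^2 + x 2^2 = 1 := by
  rw [← norm_coord, hx]; norm_num

lemma inner_cross_coord (x y z : EuclideanSpace ℝ (Fin 3)) :
    (inner ℝ x (cross3 y z)) = x 0 * (y 1 * z 2 - y 2 * z 1) + x 1 * (y 2 * z 0 - y 0 * z 2)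
      + x 2 * (y 0 * z 1 - y 1 * z 0) := by
  simp [cross3, PiLp.inner_apply, RCLike.inner_apply, Fin.sum_univ_three, mul_comm]

lemma trig_integral (a0 a1 a2 a3 a4 : ℝ) :
    ∫ φ in (0:ℝ)..(2*π), (a0 + a1*Real.cos φ + a2*Real.sin φ + a3*Real.cos (2*φ) + a4*Real.sin (2*φ))
      = 2*π*a0 := by
  have I0 : ∫ _ in (0:ℝ)..(2*π), a0 = 2*π*a0 := by simp [mul_comm]
  have I1 : ∫ φ in (0:ℝ)..(2*π), a1 * Real.cos φ = 0 := by
    rw [intervalIntegral.integral_const_mul, integral_cos]; simp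
  have I2 : ∫ φ in (0:ℝ)..(2*π), a2 * Real.sin φ = 0 := by
    rw [intervalIntegral.integral_const_mul, integral_sin]; simp
  have I3 : ∫ φ in (0:ℝ)..(2*π), a3 * Real.cos (2*φ) = 0 := by
    rw [intervalIntegral.integral_const_mul]
    rw [intervalIntegral.integral_comp_mul_left Real.cos (two_ne_zero)]
    have hs : Real.sin (2*(2*π)) = 0 := by
      rw [show (2:ℝ)*(2*π) = (4:ℕ)*π by push_cast; ring]; exact Real.sin_nat_mul_pi 4
    simp [integral_cos, hs]
  have I4 : ∫ φ in (0:ℝ)..(2*π), a4 * Real.sin (2*φ) = 0 := by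
    rw [intervalIntegral.integral_const_mul]
    rw [intervalIntegral.integral_comp_mul_left Real.sin (two_ne_zero)]
    have hc : Real.cos (2*(2*π)) = 1 := by
      rw [show (2:ℝ)*(2*π) = (2:ℕ)*(2*π) by push_cast; ring]; exact Real.cos_nat_mul_two_pi 2
    simp [integral_sin, hc]
  rw [intervalIntegral.integral_add (by apply Continuous.intervalIntegrable; continuity)
        (by apply Continuous.intervalIntegrable; continuity),
      intervalIntegral.integral_add (by apply Continuous.intervalIntegrable; continuity)
        (by apply Continuous.intervalIntegrable; continuity),
      intervalIntegral.integral_add (by apply Continuous.intervalIntegrable; continuity)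
        (by apply Continuous.intervalIntegrable; continuity),
      intervalIntegral.integral_add (by apply Continuous.intervalIntegrable; continuity)
        (by apply Continuous.intervalIntegrable; continuity)]
  rw [I0, I1, I2, I3, I4]; ring

set_option maxHeartbeats 1000000 in
/-- Average cost of the diagonal coupling of two circles:
`(1/(2π)) ∫₀^{2π} |x(φ) - y(φ)|² dφ = |b - b̃|² + r² + r̃² - r r̃ (1 + d·d̃)`. -/
theorem diagonal_coupling_cost
    (b bt : EuclideanSpace ℝ (Fin 3)) (r rt : ℝ) (hr : 0 ≤ r) (hrt : 0 ≤ rt)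
    (d dt h k kt : EuclideanSpace ℝ (Fin 3))
    (hd : ‖d‖ = 1) (hdt : ‖dt‖ = 1) (hh : ‖h‖ = 1) (hk : ‖k‖ = 1) (hkt : ‖kt‖ = 1)
    (hhd : (inner ℝ h d) = 0) (hhk : (inner ℝ h k) = 0) (hkd : (inner ℝ k d) = 0)
    (hhdt : (inner ℝ h dt) = 0) (hhkt : (inner ℝ h kt) = 0)
    (hktdt : (inner ℝ kt dt) = 0)
    (hor : (inner ℝ d (cross3 h k)) = (inner ℝ dt (cross3 h kt))) :
    (1/(2*π)) * ∫ φ in (0:ℝ)..(2*π),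
        ‖(b + (r * Real.cos φ) • k + (r * Real.sin φ) • h)
          - (bt + (rt * Real.cos φ) • kt + (rt * Real.sin φ) • h)‖ ^ 2
      = ‖b - bt‖ ^ 2 + r ^ 2 + rt ^ 2 - r * rt * (1 + (inner ℝ d dt)) := by
  have Hh' := unit_coord h hh
  have Hk' := unit_coord k hk
  have Hkt' := unit_coord kt hkt
  have Hd' := unit_coord d hd
  have Hdt' := unit_coord dt hdt
  have Ohd : h 0 * d 0 + h 1 * d 1 + h 2 * d 2 = 0 := by rw [← inner_coord]; exact hhd
  have Ohk : h 0 * k 0 + h 1 * k 1 + h 2 * k 2 = 0 := by rw [← inner_coord]; exact hhk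
  have Okd : k 0 * d 0 + k 1 * d 1 + k 2 * d 2 = 0 := by rw [← inner_coord]; exact hkd
  have Ohdt : h 0 * dt 0 + h 1 * dt 1 + h 2 * dt 2 = 0 := by rw [← inner_coord]; exact hhdt
  have Ohkt : h 0 * kt 0 + h 1 * kt 1 + h 2 * kt 2 = 0 := by rw [← inner_coord]; exact hhkt
  have Oktdt : kt 0 * dt 0 + kt 1 * dt 1 + kt 2 * dt 2 = 0 := by rw [← inner_coord]; exact hktdt
  have Hor' : d 0*(h 1*k 2-h 2*k 1) + d 1*(h 2*k 0-h 0*k 2) + d 2*(h 0*k 1-h 1*k 0) = dt 0*(h 1*kt 2-h 2*kt 1) + dt 1*(h 2*kt 0-h 0*kt 2) + dt 2*(h 0*kt 1-h 1*kt 0) := by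
    rw [← inner_cross_coord, ← inner_cross_coord]; exact hor
  have hK : d 0 * dt 0 + d 1 * dt 1 + d 2 * dt 2 = k 0 * kt 0 + k 1 * kt 1 + k 2 * kt 2 :=
    key_inner (h 0) (h 1) (h 2) (k 0) (k 1) (k 2) (kt 0) (kt 1) (kt 2)
      (d 0) (d 1) (d 2) (dt 0) (dt 1) (dt 2)
      Hh' Hk' Hkt' Hd' Hdt' Ohk Ohkt Ohd Ohdt Okd Oktdt Hor'
  have hpt : ∀ φ : ℝ,
      ‖(b + (r * Real.cos φ) • k + (r * Real.sin φ) • h)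
          - (bt + (rt * Real.cos φ) • kt + (rt * Real.sin φ) • h)‖ ^ 2
        = (((b 0 - bt 0)^2 + (b 1 - bt 1)^2 + (b 2 - bt 2)^2) + (((r*k 0 - rt*kt 0)^2 + (r*k 1 - rt*kt 1)^2 + (r*k 2 - rt*kt 2)^2) + (((r-rt)*h 0)^2 + ((r-rt)*h 1)^2 + ((r-rt)*h 2)^2))/2) + (2*((b 0 - bt 0)*(r*k 0 - rt*kt 0) + (b 1 - bt 1)*(r*k 1 - rt*kt 1) + (b 2 - bt 2)*(r*k 2 - rt*kt 2)))*Real.cos φ + (2*((b 0 - bt 0)*((r-rt)*h 0) + (b 1 - bt 1)*((r-rt)*h 1) + (b 2 - bt 2)*((r-rt)*h 2)))*Real.sin φ + ((((r*k 0 - rt*kt 0)^2 + (r*k 1 - rt*kt 1)^2 + (r*k 2 - rt*kt 2)^2) - (((r-rt)*h 0)^2 + ((r-rt)*h 1)^2 + ((r-rt)*h 2)^2))/2)*Real.cos (2*φ) + ((r*k 0 - rt*kt 0)*((r-rt)*h 0) + (r*k 1 - rt*kt 1)*((r-rt)*h 1) + (r*k 2 - rt*kt 2)*((r-rt)*h 2))*Real.sin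 (2*φ) := by
    intro φ
    rw [norm_coord, Real.cos_two_mul, Real.sin_two_mul]
    simp only [PiLp.add_apply, PiLp.sub_apply, PiLp.smul_apply, smul_eq_mul]
    linear_combination (((r-rt)*h 0)^2 + ((r-rt)*h 1)^2 + ((r-rt)*h 2)^2) * Real.sin_sq_add_cos_sq φ
  have hInt : (∫ φ in (0:ℝ)..(2*π),
      ‖(b + (r * Real.cos φ) • k + (r * Real.sin φ) • h)
          - (bt + (rt * Real.cos φ) • kt + (rt * Real.sin φ) • h)‖ ^ 2)
      = 2*π*(((b 0 - bt 0)^2 + (b 1 - bt 1)^2 + (b 2 - bt 2)^2) + (((r*k 0 - rt*kt 0)^2 + (r*k 1 - rt*kt 1)^2 + (r*k 2 - rt*kt 2)^2) + (((r-rt)*h 0)^2 + ((r-rt)*h 1)^2 + ((r-rt)*h 2)^2))/2) := by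
    rw [intervalIntegral.integral_congr (g := fun φ => (((b 0 - bt 0)^2 + (b 1 - bt 1)^2 + (b 2 - bt 2)^2) + (((r*k 0 - rt*kt 0)^2 + (r*k 1 - rt*kt 1)^2 + (r*k 2 - rt*kt 2)^2) + (((r-rt)*h 0)^2 + ((r-rt)*h 1)^2 + ((r-rt)*h 2)^2))/2) + (2*((b 0 - bt 0)*(r*k 0 - rt*kt 0) + (b 1 - bt 1)*(r*k 1 - rt*kt 1) + (b 2 - bt 2)*(r*k 2 - rt*kt 2)))*Real.cos φ + (2*((b 0 - bt 0)*((r-rt)*h 0) + (b 1 - bt 1)*((r-rt)*h 1) + (b 2 - bt 2)*((r-rt)*h 2)))*Real.sin φ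
        + ((((r*k 0 - rt*kt 0)^2 + (r*k 1 - rt*kt 1)^2 + (r*k 2 - rt*kt 2)^2) - (((r-rt)*h 0)^2 + ((r-rt)*h 1)^2 + ((r-rt)*h 2)^2))/2)*Real.cos (2*φ) + ((r*k 0 - rt*kt 0)*((r-rt)*h 0) + (r*k 1 - rt*kt 1)*((r-rt)*h 1) + (r*k 2 - rt*kt 2)*((r-rt)*h 2))*Real.sin (2*φ)) (fun φ _ => hpt φ)]
    exact trig_integral _ _ _ _ _
  rw [hInt, norm_coord (b - bt), inner_coord d dt]
  simp only [PiLp.sub_apply]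
  rw [show (1/(2*π)) * (2*π*((((b 0 - bt 0)^2 + (b 1 - bt 1)^2 + (b 2 - bt 2)^2) + (((r*k 0 - rt*kt 0)^2 + (r*k 1 - rt*kt 1)^2 + (r*k 2 - rt*kt 2)^2) + (((r-rt)*h 0)^2 + ((r-rt)*h 1)^2 + ((r-rt)*h 2)^2))/2))) = (((b 0 - bt 0)^2 + (b 1 - bt 1)^2 + (b 2 - bt 2)^2) + (((r*k 0 - rt*kt 0)^2 + (r*k 1 - rt*kt 1)^2 + (r*k 2 - rt*kt 2)^2) + (((r-rt)*h 0)^2 + ((r-rt)*h 1)^2 + ((r-rt)*h 2)^2))/2) by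
    field_simp]
  linear_combination (r^2/2)*Hk' + (rt^2/2)*Hkt' + ((r-rt)^2/2)*Hh' + (r*rt)*hK
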